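/- Let α, β > 0 and M = [[a,b],[c,d]] ∈ SL(2,ℝ). Fix (x',y',θ') with y' > 0, set Λ = (cx'+d)² + (cy')², x₁ = ((ax'+b)(cx'+d)+acy'²)/Λ, y₁ = y'/Λ. For every tangent vector (u,v,w) ∈ ℝ³ define u₁ = (y₁/(y'Λ))·[((cx'+d)²−(cy')²)u + 2cy'(cx'+d)v], v₁ = (y₁/(y'Λ))·[−2cy'(cx'+d)u + ((cx'+d)²−(cy')²)v], w₁ = w + c·(cy'·u − (cx'+d)·v)/Λ (these are the differentials of x₁, y₁, θ₁ under the SL(2,ℝ) action in Iwasawa coordinates). Then α(u₁² + v₁²)/y₁² + β(u₁/y₁ + 2w₁)² = α(u² + v²)/y'² + β(u/y' + 2w)². That is, the metric ds²_{SL(2,ℝ)} = α(dx²+dy²)/y² + β(dx/y + 2dθ)² on {(x,y,θ) : y > 0} is invariant under the SL(2,ℝ) action. -/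

import Mathlib

/-- Invariance of the two-parameter metric
`ds² = α(dx²+dy²)/y² + β(dx/y + 2dθ)²` on `SL(2,ℝ) ≅ {(x,y,θ) : y > 0}`
under the left `SL(2,ℝ)` action: with `Λ = (cx'+d)² + (cy')²`,
`x₁ = ((ax'+b)(cx'+d)+acy'²)/Λ`, `y₁ = y'/Λ` and the differentials
`(u₁,v₁,w₁)` of `(x₁,y₁,θ₁)` applied to a tangent vector `(u,v,w)`,
the metric is preserved. -/
theorem sl2_metric_invariant (α β a b c d x' y' θ' u v w : ℝ)
    (hα : 0 < α) (hβ : 0 < β) (h : a * d - b * c = 1) (hy : 0 < y') :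
    let Λ := (c * x' + d) ^ 2 + (c * y') ^ 2
    let y₁ := y' / Λ
    let u₁ := y₁ / (y' * Λ) *
      (((c * x' + d) ^ 2 - (c * y') ^ 2) * u + 2 * c * y' * (c * x' + d) * v)
    let v₁ := y₁ / (y' * Λ) *
      (-(2 * c * y' * (c * x' + d)) * u + ((c * x' + d) ^ 2 - (c * y') ^ 2) * v)
    let w₁ := w + c * (c * y' * u - (c * x' + d) * v) / Λ
    α * (u₁ ^ 2 + v₁ ^ 2) / y₁ ^ 2 + β * (u₁ / y₁ + 2 * w₁) ^ 2 =
      α * (u ^ 2 + v ^ 2) / y' ^ 2 + β * (u / y' + 2 * w) ^ 2 := by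
  intro Λ y₁ u₁ v₁ w₁
  have hΛ : Λ ≠ 0 := by
    rcases eq_or_ne c 0 with hc | hc
    · have hd : d ≠ 0 := by intro hd; rw [hc, hd] at h; simp at h
      have hΛd : Λ = d ^ 2 := by simp [Λ, hc]
      rw [hΛd]; exact pow_ne_zero 2 hd
    · have : (c * y') ^ 2 > 0 := by positivity
      have : Λ > 0 := by positivity
      exact this.ne'
  have hy' : y' ≠ 0 := hy.ne'
  simp only [Λ, y₁, u₁, v₁, w₁] at *
  have hΛ2 : (c * x' + d) ^ 2 + y' ^ 2 * c ^ 2 ≠ 0 := by convert hΛ using 2; ring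
  field_simp
  ring
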